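/- Let r be a nonzero integer and let μ : H_r → Γ_r be the injective homomorphism with μ(g₁) = ((1,0),0), μ(g₂) = ((0,1),0), μ(g₃) = ((0,0),1). Then an element ((l₁,l₂), λ) ∈ Γ_r lies in the image of μ if and only if λ − (r/2) l₁ l₂ ∈ ℤ. -/

import Mathlib

/-- `ℤ[r/2]`: the additive subgroup of `ℚ` generated by `1` and `r/2`;
it equals `ℤ` if `r` is even and `(1/2)ℤ` if `r` is odd. -/
def Zr (r : ℤ) : AddSubgroup ℚ := AddSubgroup.closure {1, (r : ℚ) / 2}

lemma intCast_mem_Zr (r n : ℤ) : (n : ℚ) ∈ Zr r := by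
  have h1 : (1 : ℚ) ∈ Zr r := AddSubgroup.subset_closure (by simp)
  simpa using AddSubgroup.zsmul_mem _ h1 n

lemma half_mul_intCast_mem_Zr (r n : ℤ) : (r : ℚ) / 2 * (n : ℚ) ∈ Zr r := by
  have h1 : (r : ℚ) / 2 ∈ Zr r := AddSubgroup.subset_closure (by simp)
  have := AddSubgroup.zsmul_mem _ h1 n
  simpa [zsmul_eq_mul, mul_comm] using this

/-- The group `Γ_r`, with underlying set `ℤ² × ℤ[r/2]` and multiplication
`(ζ, y)(ζ', y') = (ζ + ζ', y + y' + (r/2) det(ζ, ζ'))`. -/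
@[ext]
structure GammaR (r : ℤ) where
  zeta : Fin 2 → ℤ
  y : ℚ
  hy : y ∈ Zr r

namespace GammaR

variable {r : ℤ}

instance : Mul (GammaR r) :=
  ⟨fun a b =>
    ⟨a.zeta + b.zeta,
     a.y + b.y + (r : ℚ) / 2 * ((a.zeta 0 * b.zeta 1 - a.zeta 1 * b.zeta 0 : ℤ) : ℚ),
     add_mem (add_mem a.hy b.hy) (half_mul_intCast_mem_Zr r _)⟩⟩

instance : One (GammaR r) := ⟨⟨0, 0, zero_mem _⟩⟩

instance : Inv (GammaR r) := ⟨fun a => ⟨-a.zeta, -a.y, neg_mem a.hy⟩⟩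

@[simp] lemma mul_zeta (a b : GammaR r) : (a * b).zeta = a.zeta + b.zeta := rfl
@[simp] lemma mul_y (a b : GammaR r) :
    (a * b).y = a.y + b.y + (r : ℚ) / 2 *
      ((a.zeta 0 * b.zeta 1 - a.zeta 1 * b.zeta 0 : ℤ) : ℚ) := rfl
@[simp] lemma one_zeta : (1 : GammaR r).zeta = 0 := rfl
@[simp] lemma one_y : (1 : GammaR r).y = 0 := rfl
@[simp] lemma inv_zeta (a : GammaR r) : a⁻¹.zeta = -a.zeta := rfl
@[simp] lemma inv_y (a : GammaR r) : a⁻¹.y = -a.y := rfl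

instance : Group (GammaR r) where
  mul_assoc a b c := by
    ext
    · simp [add_assoc]
    · simp only [mul_y, mul_zeta, Pi.add_apply]
      push_cast
      ring
  one_mul a := by ext <;> simp
  mul_one a := by ext <;> simp
  inv_mul_cancel a := by
    ext
    · simp
    · simp only [mul_y, inv_y, inv_zeta, Pi.neg_apply, one_y]
      push_cast
      ring

/-- The element `((l₁,l₂), l₃ + l₁l₂r/2)` of `Γ_r`. -/
def elt (r l1 l2 l3 : ℤ) : GammaR r :=
  ⟨![l1, l2], (l3 : ℚ) + (l1 : ℚ) * (l2 : ℚ) * (r : ℚ) / 2, by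
    have h1 := intCast_mem_Zr r l3
    have h2 := half_mul_intCast_mem_Zr r (l1 * l2)
    have : (l3 : ℚ) + (r : ℚ) / 2 * ((l1 * l2 : ℤ) : ℚ) ∈ Zr r := add_mem h1 h2
    convert this using 1
    push_cast
    ring⟩

end GammaR

/-- The relations of the group `H_r`: generators `g₁,g₂,g₃` (indexed by `Fin 3`) and
relations `g₁g₂g₁⁻¹g₂⁻¹ = g₃^{r}`, `g₁g₃ = g₃g₁`, `g₂g₃ = g₃g₂`. -/
def hRels (r : ℤ) : Set (FreeGroup (Fin 3)) :=
  { FreeGroup.of 0 * FreeGroup.of 1 * (FreeGroup.of 0)⁻¹ * (FreeGroup.of 1)⁻¹ *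
      ((FreeGroup.of 2) ^ r)⁻¹,
    FreeGroup.of 0 * FreeGroup.of 2 * (FreeGroup.of 0)⁻¹ * (FreeGroup.of 2)⁻¹,
    FreeGroup.of 1 * FreeGroup.of 2 * (FreeGroup.of 1)⁻¹ * (FreeGroup.of 2)⁻¹ }

/-- The group `H_r`. -/
abbrev Hr (r : ℤ) := PresentedGroup (hRels r)



namespace GammaR
variable {r : ℤ}

lemma elt_zeta0 (l1 l2 l3 : ℤ) : (elt r l1 l2 l3).zeta 0 = l1 := rfl
lemma elt_zeta1 (l1 l2 l3 : ℤ) : (elt r l1 l2 l3).zeta 1 = l2 := rfl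

lemma pow_g1 (n : ℤ) : (elt r 1 0 0) ^ n = elt r n 0 0 := by
  induction n using Int.induction_on with
  | zero => ext i <;> try rfl
            · fin_cases i <;> simp [elt, zpow_zero]
            · simp [elt]
  | succ k ih =>
    rw [zpow_add_one, ih]
    ext i
    · fin_cases i <;> simp [elt] <;> ring
    · simp only [mul_y, elt, Matrix.cons_val_zero, Matrix.cons_val_one, Matrix.head_cons]
      push_cast
      ring
  | pred k ih =>
    rw [zpow_sub_one, ih]
    ext i
    · fin_cases i <;> simp [elt] <;> ring
    · simp only [mul_y, inv_y, inv_zeta, elt, Pi.neg_apply, Matrix.cons_val_zero,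
        Matrix.cons_val_one, Matrix.head_cons]
      push_cast
      ring

lemma pow_g2 (n : ℤ) : (elt r 0 1 0) ^ n = elt r 0 n 0 := by
  induction n using Int.induction_on with
  | zero => ext i <;> try rfl
            · fin_cases i <;> simp [elt, zpow_zero]
            · simp [elt]
  | succ k ih =>
    rw [zpow_add_one, ih]
    ext i
    · fin_cases i <;> simp [elt] <;> ring
    · simp only [mul_y, elt, Matrix.cons_val_zero, Matrix.cons_val_one, Matrix.head_cons]
      push_cast
      ring
  | pred k ih =>
    rw [zpow_sub_one, ih]
    ext i
    · fin_cases i <;> simp [elt] <;> ring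
    · simp only [mul_y, inv_y, inv_zeta, elt, Pi.neg_apply, Matrix.cons_val_zero,
        Matrix.cons_val_one, Matrix.head_cons]
      push_cast
      ring

lemma pow_g3 (n : ℤ) : (elt r 0 0 1) ^ n = elt r 0 0 n := by
  induction n using Int.induction_on with
  | zero => ext i <;> try rfl
            · fin_cases i <;> simp [elt, zpow_zero]
            · simp [elt]
  | succ k ih =>
    rw [zpow_add_one, ih]
    ext i
    · fin_cases i <;> simp [elt] <;> ring
    · simp only [mul_y, elt, Matrix.cons_val_zero, Matrix.cons_val_one, Matrix.head_cons]
      push_cast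
      ring
  | pred k ih =>
    rw [zpow_sub_one, ih]
    ext i
    · fin_cases i <;> simp [elt] <;> ring
    · simp only [mul_y, inv_y, inv_zeta, elt, Pi.neg_apply, Matrix.cons_val_zero,
        Matrix.cons_val_one, Matrix.head_cons]
      push_cast
      ring

end GammaR

/-- The subgroup of `Γ_r` of elements with `λ - (r/2)l₁l₂ ∈ ℤ`. -/
def gammaS (r : ℤ) : Subgroup (GammaR r) where
  carrier := {x | ∃ n : ℤ, x.y - (r : ℚ) / 2 * (x.zeta 0) * (x.zeta 1) = (n : ℚ)}
  one_mem' := ⟨0, by simp⟩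
  mul_mem' := by
    rintro a b ⟨n, hn⟩ ⟨m, hm⟩
    refine ⟨n + m - r * (a.zeta 1) * (b.zeta 0), ?_⟩
    simp only [GammaR.mul_y, GammaR.mul_zeta, Pi.add_apply]
    push_cast
    linear_combination hn + hm
  inv_mem' := by
    rintro a ⟨n, hn⟩
    refine ⟨-n - r * (a.zeta 0) * (a.zeta 1), ?_⟩
    simp only [GammaR.inv_y, GammaR.inv_zeta, Pi.neg_apply]
    push_cast
    linear_combination -hn

/-- Let `μ : H_r → Γ_r` be the injective homomorphism with `μ(g₁) = ((1,0),0)`,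
`μ(g₂) = ((0,1),0)`, `μ(g₃) = ((0,0),1)`. An element `((l₁,l₂),λ)` of `Γ_r` lies in the
image of `μ` iff `λ − (r/2)l₁l₂ ∈ ℤ`. -/
theorem stmt_6 (r : ℤ) (hr : r ≠ 0) (μ : Hr r →* GammaR r)
    (hinj : Function.Injective μ)
    (h1 : μ (PresentedGroup.of 0) = GammaR.elt r 1 0 0)
    (h2 : μ (PresentedGroup.of 1) = GammaR.elt r 0 1 0)
    (h3 : μ (PresentedGroup.of 2) = GammaR.elt r 0 0 1) :
    ∀ x : GammaR r,
      x ∈ μ.range ↔ ∃ n : ℤ, x.y - (r : ℚ) / 2 * (x.zeta 0) * (x.zeta 1) = (n : ℚ) := by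
  intro x
  constructor
  · rintro ⟨g, rfl⟩
    obtain ⟨w, rfl⟩ := QuotientGroup.mk'_surjective _ g
    show μ (QuotientGroup.mk' _ w) ∈ (gammaS r : Set (GammaR r))
    induction w using FreeGroup.induction_on with
    | C1 => simp only [map_one]; exact (map_one μ).symm ▸ (gammaS r).one_mem
    | of i =>
      show μ (PresentedGroup.of i) ∈ (gammaS r : Set (GammaR r))
      fin_cases i
      · show μ (PresentedGroup.of 0) ∈ (gammaS r : Set (GammaR r))
        rw [h1]; exact ⟨0, by simp [GammaR.elt]⟩
      · show μ (PresentedGroup.of 1) ∈ (gammaS r : Set (GammaR r))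
        rw [h2]; exact ⟨0, by simp [GammaR.elt]⟩
      · show μ (PresentedGroup.of 2) ∈ (gammaS r : Set (GammaR r))
        rw [h3]; exact ⟨1, by simp [GammaR.elt]⟩
    | inv_of i hi =>
      rw [map_inv]
      exact (congrArg (· ∈ gammaS r) (map_inv μ (QuotientGroup.mk' _ (FreeGroup.of i)))).mpr
        ((gammaS r).inv_mem hi)
    | mul a b ha hb =>
      rw [map_mul]
      exact (congrArg (· ∈ gammaS r) (map_mul μ (QuotientGroup.mk' _ a) (QuotientGroup.mk' _ b))).mpr
        ((gammaS r).mul_mem ha hb)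
  · rintro ⟨n, hn⟩
    refine ⟨PresentedGroup.of 0 ^ (x.zeta 0) * PresentedGroup.of 1 ^ (x.zeta 1) *
      PresentedGroup.of 2 ^ n, ?_⟩
    rw [map_mul, map_mul, map_zpow, map_zpow, map_zpow, h1, h2, h3,
      GammaR.pow_g1, GammaR.pow_g2, GammaR.pow_g3]
    ext i
    · fin_cases i <;> simp [GammaR.elt]
    · simp only [GammaR.mul_y, GammaR.mul_zeta, Pi.add_apply, GammaR.elt]
      push_cast
      linear_combination -hn
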